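/- Let A = U·D·U⁻¹ be a real 3×3 matrix with U invertible and D = diag(λ1, λ2, λ3) real diagonal. Then (2/(9·κ₂²))·J2(A) ≤ ‖dev(A)‖_F² ≤ 18·κ₂²·J2(A), where κ₂ = ‖U‖₂·‖U⁻¹‖₂. -/
import Mathlib

noncomputable def dev (A : Matrix (Fin 3) (Fin 3) ℝ) : Matrix (Fin 3) (Fin 3) ℝ :=
  A - (Matrix.trace A / 3) • (1 : Matrix (Fin 3) (Fin 3) ℝ)

noncomputable def J2 (A : Matrix (Fin 3) (Fin 3) ℝ) : ℝ :=
  (1 / 2) * Matrix.trace (dev A * dev A)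

/-- The Frobenius norm `‖X‖_F = √(tr(Xᵀ·X))`. -/
noncomputable def frobNorm (X : Matrix (Fin 3) (Fin 3) ℝ) : ℝ :=
  Real.sqrt (Matrix.trace (X.transpose * X))

/-- The spectral norm: the operator norm induced by the Euclidean vector norm. -/
noncomputable def specNorm (U : Matrix (Fin 3) (Fin 3) ℝ) : ℝ :=
  ‖LinearMap.toContinuousLinearMap (Matrix.toEuclideanLin U)‖

attribute [local instance] Matrix.frobeniusNormedAddCommGroup

lemma fnorm_sq (X : Matrix (Fin 3) (Fin 3) ℝ) :
    ‖X‖ ^ 2 = ∑ i, ∑ j, X i j ^ 2 := by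
  have h0 : (0:ℝ) ≤ ∑ i, ∑ j, X i j ^ 2 :=
    Finset.sum_nonneg fun _ _ => Finset.sum_nonneg fun _ _ => sq_nonneg _
  rw [Matrix.frobenius_norm_def]
  have he : ∀ i j : Fin 3, ‖X i j‖ ^ (2:ℝ) = X i j ^ 2 := by
    intro i j; rw [Real.rpow_two, Real.norm_eq_abs, sq_abs]
  simp_rw [he]
  rw [← Real.rpow_natCast ((∑ i, ∑ j, X i j ^ 2) ^ (1/2:ℝ)) 2, ← Real.rpow_mul h0]
  norm_num

lemma frobNorm_eq (X : Matrix (Fin 3) (Fin 3) ℝ) : frobNorm X = ‖X‖ := by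
  have htr : Matrix.trace (X.transpose * X) = ∑ i, ∑ j, X i j ^ 2 := by
    simp only [Matrix.trace, Matrix.diag, Matrix.mul_apply, Matrix.transpose_apply]
    rw [Finset.sum_comm]
    simp [sq]
  have : frobNorm X ^ 2 = ‖X‖ ^ 2 := by
    rw [fnorm_sq, frobNorm, htr, Real.sq_sqrt]
    exact Finset.sum_nonneg fun _ _ => Finset.sum_nonneg fun _ _ => sq_nonneg _
  have h := congrArg Real.sqrt this
  rwa [Real.sqrt_sq (x := frobNorm X) (Real.sqrt_nonneg _),
    Real.sqrt_sq (norm_nonneg _)] at h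

lemma fnorm_sq_le (X : Matrix (Fin 3) (Fin 3) ℝ) :
    ‖X‖ ^ 2 ≤ 3 * specNorm X ^ 2 := by
  rw [fnorm_sq, Finset.sum_comm]
  have key : ∀ j : Fin 3, (∑ i, X i j ^ 2) ≤ specNorm X ^ 2 := by
    intro j
    set v : EuclideanSpace ℝ (Fin 3) := EuclideanSpace.single j (1:ℝ) with hv
    have hvn : ‖v‖ = 1 := by simp [hv]
    have hle : ‖(Matrix.toEuclideanLin X) v‖ ≤ specNorm X := by
      have := (LinearMap.toContinuousLinearMap (Matrix.toEuclideanLin X)).le_opNorm v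
      simpa [specNorm, hvn] using this
    have hsq : ‖(Matrix.toEuclideanLin X) v‖ ^ 2 = ∑ i, X i j ^ 2 := by
      rw [EuclideanSpace.norm_eq]
      rw [Real.sq_sqrt (Finset.sum_nonneg fun _ _ => sq_nonneg _)]
      congr 1; ext i
      have : (Matrix.toEuclideanLin X v) i = X i j := by
        have h1 : (Matrix.toEuclideanLin X v) i = ∑ k, X i k * v k := rfl
        rw [h1]
        simp [hv, EuclideanSpace.single_apply]
      rw [this, Real.norm_eq_abs, sq_abs]
    calc (∑ i, X i j ^ 2) = ‖(Matrix.toEuclideanLin X) v‖ ^ 2 := hsq.symm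
      _ ≤ specNorm X ^ 2 := by
          apply pow_le_pow_left₀ (norm_nonneg _) hle
  calc (∑ j : Fin 3, ∑ i, X i j ^ 2) ≤ ∑ _j : Fin 3, specNorm X ^ 2 :=
        Finset.sum_le_sum fun j _ => key j
    _ = 3 * specNorm X ^ 2 := by simp [Finset.sum_const]

lemma triple_mul_le {x y z X Z : ℝ} (hx : x ≤ X) (hz : z ≤ Z) (hx0 : 0 ≤ x)
    (hy0 : 0 ≤ y) (hz0 : 0 ≤ z) (hX0 : 0 ≤ X) : x * y * z ≤ X * y * Z := by
  have h1 : x * y ≤ X * y := mul_le_mul_of_nonneg_right hx hy0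
  have h2 : x * y * z ≤ X * y * z := mul_le_mul_of_nonneg_right h1 hz0
  have h3 : X * y * z ≤ X * y * Z := mul_le_mul_of_nonneg_left hz (mul_nonneg hX0 hy0)
  linarith

/-- For a real diagonalizable `3 × 3` matrix `A = U·D·U⁻¹` with real diagonal `D`,
`(2/(9κ₂²))·J2(A) ≤ ‖dev(A)‖_F² ≤ 18·κ₂²·J2(A)` where `κ₂ = ‖U‖₂·‖U⁻¹‖₂`. -/
theorem dev_J2_estimate (U : Matrix (Fin 3) (Fin 3) ℝ) (hU : IsUnit U) (l : Fin 3 → ℝ)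
    (A : Matrix (Fin 3) (Fin 3) ℝ) (hA : A = U * Matrix.diagonal l * U⁻¹) :
    (2 / (9 * (specNorm U * specNorm U⁻¹) ^ 2)) * J2 A ≤ frobNorm (dev A) ^ 2 ∧
      frobNorm (dev A) ^ 2 ≤ 18 * (specNorm U * specNorm U⁻¹) ^ 2 * J2 A := by
  have hUdet : IsUnit U.det := (Matrix.isUnit_iff_isUnit_det U).mp hU
  have hUU : U * U⁻¹ = 1 := Matrix.mul_nonsing_inv U hUdet
  have hUU' : U⁻¹ * U = 1 := Matrix.nonsing_inv_mul U hUdet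
  set D := Matrix.diagonal l with hD
  have htrA : Matrix.trace A = Matrix.trace D := by
    rw [hA, Matrix.trace_mul_cycle, hUU', one_mul]
  set c := Matrix.trace D / 3 with hc
  set m : Fin 3 → ℝ := fun i => l i - c with hm
  have hN : D - c • (1 : Matrix (Fin 3) (Fin 3) ℝ) = Matrix.diagonal m := by
    ext i j
    by_cases h : i = j
    · subst h; simp [hD, hm, Matrix.one_apply, Matrix.diagonal_apply]
    · simp [hD, hm, Matrix.one_apply, Matrix.diagonal_apply, h]
  have hdev : dev A = U * Matrix.diagonal m * U⁻¹ := by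
    rw [dev, htrA, ← hc, hA, ← hN, Matrix.mul_sub, Matrix.sub_mul]
    congr 1
    rw [mul_smul_comm, Matrix.mul_one, smul_mul_assoc, hUU]
  have hprod : ∀ X Y : Matrix (Fin 3) (Fin 3) ℝ,
      (U * X * U⁻¹) * (U * Y * U⁻¹) = U * (X * Y) * U⁻¹ := by
    intro X Y
    simp only [Matrix.mul_assoc]
    rw [← Matrix.mul_assoc U⁻¹ U (Y * U⁻¹), hUU', one_mul]
  have hJ : J2 A = (1/2) * ∑ i, m i ^ 2 := by
    rw [J2, hdev, hprod, Matrix.trace_mul_cycle, hUU', one_mul,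
      Matrix.diagonal_mul_diagonal, Matrix.trace_diagonal]
    simp [sq]
  have hJ0 : 0 ≤ J2 A := by
    rw [hJ]
    positivity
  have hM2 : ‖Matrix.diagonal m‖ ^ 2 = 2 * J2 A := by
    rw [← frobNorm_eq, frobNorm, Matrix.diagonal_transpose,
      Matrix.diagonal_mul_diagonal, Matrix.trace_diagonal,
      Real.sq_sqrt (Finset.sum_nonneg fun i _ => mul_self_nonneg _)]
    have hmm2 : (∑ i, m i * m i) = ∑ i, m i ^ 2 := by simp [sq]
    rw [hmm2, hJ]
    ring
  -- positivity of spectral norms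
  have hUne : U ≠ 0 := by
    intro h
    rw [h, zero_mul] at hUU
    exact one_ne_zero hUU.symm
  have hVne : U⁻¹ ≠ 0 := by
    intro h
    rw [h, mul_zero] at hUU
    exact one_ne_zero hUU.symm
  have hsU0 : 0 < specNorm U := by
    have h0 : 0 < ‖U‖ := norm_pos_iff.mpr hUne
    have h1 : 0 < ‖U‖ ^ 2 := by positivity
    have h2 := fnorm_sq_le U
    have hs : (0:ℝ) ≤ specNorm U := by exact norm_nonneg _
    nlinarith
  have hsV0 : 0 < specNorm U⁻¹ := by
    have h0 : 0 < ‖U⁻¹‖ := norm_pos_iff.mpr hVne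
    have h1 : 0 < ‖U⁻¹‖ ^ 2 := by positivity
    have h2 := fnorm_sq_le U⁻¹
    have hs : (0:ℝ) ≤ specNorm U⁻¹ := by exact norm_nonneg _
    nlinarith
  have hsU := fnorm_sq_le U
  have hsV := fnorm_sq_le U⁻¹
  rw [frobNorm_eq]
  constructor
  · -- lower bound
    have hdm : Matrix.diagonal m = U⁻¹ * dev A * U := by
      rw [hdev]
      have : U⁻¹ * (U * Matrix.diagonal m * U⁻¹) * U
          = (U⁻¹ * U) * Matrix.diagonal m * (U⁻¹ * U) := by noncomm_ring
      rw [this, hUU', one_mul, mul_one]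
    have h1 : ‖Matrix.diagonal m‖ ≤ ‖U⁻¹‖ * ‖dev A‖ * ‖U‖ := by
      rw [hdm]
      calc ‖U⁻¹ * dev A * U‖ ≤ ‖U⁻¹ * dev A‖ * ‖U‖ := Matrix.frobenius_norm_mul _ _
        _ ≤ ‖U⁻¹‖ * ‖dev A‖ * ‖U‖ :=
            mul_le_mul_of_nonneg_right (Matrix.frobenius_norm_mul _ _) (norm_nonneg _)
    have h2 : ‖Matrix.diagonal m‖ ^ 2 ≤ ‖U⁻¹‖ ^ 2 * ‖dev A‖ ^ 2 * ‖U‖ ^ 2 := by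
      have := pow_le_pow_left₀ (norm_nonneg _) h1 2
      calc ‖Matrix.diagonal m‖ ^ 2 ≤ (‖U⁻¹‖ * ‖dev A‖ * ‖U‖) ^ 2 := this
        _ = ‖U⁻¹‖ ^ 2 * ‖dev A‖ ^ 2 * ‖U‖ ^ 2 := by ring
    have h3 : 2 * J2 A ≤ 9 * (specNorm U * specNorm U⁻¹) ^ 2 * ‖dev A‖ ^ 2 := by
      rw [← hM2]
      calc ‖Matrix.diagonal m‖ ^ 2 ≤ ‖U⁻¹‖ ^ 2 * ‖dev A‖ ^ 2 * ‖U‖ ^ 2 := h2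
        _ ≤ (3 * specNorm U⁻¹ ^ 2) * ‖dev A‖ ^ 2 * (3 * specNorm U ^ 2) :=
            triple_mul_le hsV hsU (sq_nonneg _) (sq_nonneg _) (sq_nonneg _)
              (by positivity)
        _ = 9 * (specNorm U * specNorm U⁻¹) ^ 2 * ‖dev A‖ ^ 2 := by ring
    have hk : 0 < 9 * (specNorm U * specNorm U⁻¹) ^ 2 := by positivity
    rw [div_mul_eq_mul_div, div_le_iff₀ hk]
    calc 2 * J2 A ≤ 9 * (specNorm U * specNorm U⁻¹) ^ 2 * ‖dev A‖ ^ 2 := h3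
      _ = ‖dev A‖ ^ 2 * (9 * (specNorm U * specNorm U⁻¹) ^ 2) := by ring
  · -- upper bound
    have h1 : ‖dev A‖ ≤ ‖U‖ * ‖Matrix.diagonal m‖ * ‖U⁻¹‖ := by
      rw [hdev]
      calc ‖U * Matrix.diagonal m * U⁻¹‖ ≤ ‖U * Matrix.diagonal m‖ * ‖U⁻¹‖ :=
            Matrix.frobenius_norm_mul _ _
        _ ≤ ‖U‖ * ‖Matrix.diagonal m‖ * ‖U⁻¹‖ :=
            mul_le_mul_of_nonneg_right (Matrix.frobenius_norm_mul _ _) (norm_nonneg _)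
    have h2 : ‖dev A‖ ^ 2 ≤ ‖U‖ ^ 2 * ‖Matrix.diagonal m‖ ^ 2 * ‖U⁻¹‖ ^ 2 := by
      have := pow_le_pow_left₀ (norm_nonneg _) h1 2
      calc ‖dev A‖ ^ 2 ≤ (‖U‖ * ‖Matrix.diagonal m‖ * ‖U⁻¹‖) ^ 2 := this
        _ = ‖U‖ ^ 2 * ‖Matrix.diagonal m‖ ^ 2 * ‖U⁻¹‖ ^ 2 := by ring
    calc ‖dev A‖ ^ 2 ≤ ‖U‖ ^ 2 * ‖Matrix.diagonal m‖ ^ 2 * ‖U⁻¹‖ ^ 2 := h2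
      _ ≤ (3 * specNorm U ^ 2) * (2 * J2 A) * (3 * specNorm U⁻¹ ^ 2) := by
          rw [← hM2]
          exact triple_mul_le hsU hsV (sq_nonneg _) (sq_nonneg _) (sq_nonneg _)
            (by positivity)
      _ = 18 * (specNorm U * specNorm U⁻¹) ^ 2 * J2 A := by ring
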